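/- If f₁(x) = iδ with i ≥ ⌊(p+2δ+1)·opt/δ⌋ ≥ ((p+2δ+1)·opt/δ) - 1 and f₁(x) ≤ α'_0·e^{-f₂(x)/opt} + (p+2δ)·opt with opt > δ > 0 and α'_0 > 0, then f₂(x) ≤ opt·ln(α'_0/(opt - δ)). -/

import Mathlib

theorem stmt_17 (p δ opt α0 f1 f2 : ℝ) (i : ℕ)
    (hp : 0 ≤ p) (hδ : 0 < δ) (hopt : δ < opt) (hα0 : 0 < α0)
    (hf1 : f1 = (i : ℝ) * δ)
    (hi : (⌊(p + 2 * δ + 1) * opt / δ⌋ : ℤ) ≤ (i : ℤ))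
    (hqc : f1 ≤ α0 * Real.exp (-f2 / opt) + (p + 2 * δ) * opt) :
    f2 ≤ opt * Real.log (α0 / (opt - δ)) := by
  have hopt0 : 0 < opt := hδ.trans hopt
  have hfloor : (p + 2 * δ + 1) * opt / δ - 1 ≤ (⌊(p + 2 * δ + 1) * opt / δ⌋ : ℝ) := by
    have := Int.sub_one_lt_floor ((p + 2 * δ + 1) * opt / δ)
    linarith
  have hiR : (p + 2 * δ + 1) * opt / δ - 1 ≤ (i : ℝ) := by
    have : ((⌊(p + 2 * δ + 1) * opt / δ⌋ : ℤ) : ℝ) ≤ (i : ℝ) := by exact_mod_cast hi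
    linarith
  have hf1lb : (p + 2 * δ + 1) * opt - δ ≤ f1 := by
    rw [hf1]
    have h := mul_le_mul_of_nonneg_right hiR hδ.le
    rw [sub_mul, div_mul_cancel₀ _ hδ.ne', one_mul] at h
    linarith
  have hkey : opt - δ ≤ α0 * Real.exp (-f2 / opt) := by nlinarith
  have hpos : 0 < opt - δ := by linarith
  have hexp : (opt - δ) / α0 ≤ Real.exp (-f2 / opt) :=
    (div_le_iff₀ hα0).2 (by linarith [hkey, mul_comm α0 (Real.exp (-f2 / opt))])
  have hlog : Real.log ((opt - δ) / α0) ≤ -f2 / opt := by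
    have := Real.log_le_log (div_pos hpos hα0) hexp
    simpa [Real.log_exp] using this
  have hlogeq : Real.log ((opt - δ) / α0) = -Real.log (α0 / (opt - δ)) := by
    rw [Real.log_div hpos.ne' hα0.ne', Real.log_div hα0.ne' hpos.ne']; ring
  rw [hlogeq] at hlog
  have := mul_le_mul_of_nonneg_left hlog hopt0.le
  have heq : opt * (-f2 / opt) = -f2 := by field_simp
  rw [heq] at this
  linarith
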